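/- The map ψ is a bijection from P onto Q, and for every t ∈ P one has Σ_j i_j·ψ(t)_j = Σ_j i_j·t_j; that is, ψ(t) − t lies in the hyperplane ℋ = {x ∈ ℝ^m : i_1x_1 + ⋯ + i_mx_m = 0}. -/

import Mathlib

open scoped BigOperators

/-- One step `s → s'` of the continuous O'Hara algorithm on `ℝ^m`:
for some index `j` with `s_j ≥ b_j`, subtract `b_j` from the `j`-th
coordinate and add `a_{j-1}` to the `(j-1)`-st coordinate
(indices cyclically modulo `m`). -/
def CStep (m : ℕ) [NeZero m] (a b : Fin m → ℝ) (s s' : Fin m → ℝ) : Prop :=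
  ∃ j : Fin m, b j ≤ s j ∧
    ∀ l, s' l = s l + (if l = j - 1 then a (j - 1) else 0)
                    - (if l = j then b j else 0)

/-- Membership in the half-open box `[0,a_1) × ⋯ × [0,a_m)`. -/
def InBox {m : ℕ} (a : Fin m → ℝ) (t : Fin m → ℝ) : Prop :=
  ∀ j, 0 ≤ t j ∧ t j < a j

namespace Ohara

variable {m : ℕ} [NeZero m]

example (j : Fin m) : (1 : Fin m) - j - 1 = -j := by abel

noncomputable def stepAt (α β : Fin m → ℝ) (j : Fin m) (s : Fin m → ℝ) : Fin m → ℝ :=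
  fun l => s l + (if l = j - 1 then α (j - 1) else 0) - (if l = j then β j else 0)

lemma cstep_iff {α β : Fin m → ℝ} {s s' : Fin m → ℝ} :
    CStep m α β s s' ↔ ∃ j, β j ≤ s j ∧ s' = stepAt α β j s := by
  constructor
  · rintro ⟨j, hj, h⟩; exact ⟨j, hj, funext h⟩
  · rintro ⟨j, hj, rfl⟩; exact ⟨j, hj, fun l => rfl⟩

lemma stepAt_comm (α β : Fin m → ℝ) (j k : Fin m) (s : Fin m → ℝ) :
    stepAt α β j (stepAt α β k s) = stepAt α β k (stepAt α β j s) := by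
  funext l; simp only [stepAt]; ring

lemma le_stepAt {α β : Fin m → ℝ} (hα : ∀ j, 0 < α j) {j k : Fin m} (hne : k ≠ j)
    (s : Fin m → ℝ) : s k ≤ stepAt α β j s k := by
  simp only [stepAt, if_neg hne]
  have h0 : (0:ℝ) ≤ (if k = j - 1 then α (j-1) else 0) := by
    split_ifs; exacts [(hα _).le, le_rfl]
  linarith

def Normal (β : Fin m → ℝ) (s : Fin m → ℝ) : Prop := ∀ j, s j < β j

lemma normal_no_step {α β : Fin m → ℝ} {s s' : Fin m → ℝ} (hn : Normal β s) :
    ¬ CStep m α β s s' := by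
  rintro ⟨j, hj, -⟩; exact absurd hj (not_le.2 (hn j))

lemma rtg_normal_eq {α β : Fin m → ℝ} {s s' : Fin m → ℝ} (hn : Normal β s)
    (h : Relation.ReflTransGen (CStep m α β) s s') : s' = s := by
  rcases Relation.ReflTransGen.cases_head h with rfl | ⟨u, hsu, -⟩
  · rfl
  · exact absurd hsu (normal_no_step hn)

lemma diamond {α β : Fin m → ℝ} (hα : ∀ j, 0 < α j) :
    ∀ s s₁ s₂, CStep m α β s s₁ → CStep m α β s s₂ →
      ∃ d, Relation.ReflGen (CStep m α β) s₁ d ∧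
        Relation.ReflTransGen (CStep m α β) s₂ d := by
  intro s s₁ s₂ h1 h2
  rcases cstep_iff.1 h1 with ⟨j, hj, rfl⟩
  rcases cstep_iff.1 h2 with ⟨k, hk, rfl⟩
  by_cases hjk : j = k
  · subst hjk; exact ⟨_, .refl, .refl⟩
  · refine ⟨stepAt α β k (stepAt α β j s), Relation.ReflGen.single ?_,
      Relation.ReflTransGen.single ?_⟩
    · exact cstep_iff.2 ⟨k, le_trans hk (le_stepAt hα (Ne.symm hjk) s), rfl⟩
    · rw [stepAt_comm]
      exact cstep_iff.2 ⟨j, le_trans hj (le_stepAt hα hjk s), rfl⟩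

lemma uniq {α β : Fin m → ℝ} (hα : ∀ j, 0 < α j) {t s₁ s₂ : Fin m → ℝ}
    (h1 : Relation.ReflTransGen (CStep m α β) t s₁)
    (h2 : Relation.ReflTransGen (CStep m α β) t s₂)
    (n1 : Normal β s₁) (n2 : Normal β s₂) : s₁ = s₂ := by
  rcases Relation.church_rosser (diamond hα) h1 h2 with ⟨d, hd1, hd2⟩
  rw [← rtg_normal_eq n1 hd1, ← rtg_normal_eq n2 hd2]

lemma nonneg_step {α β : Fin m → ℝ} (hα : ∀ j, 0 < α j) {s s' : Fin m → ℝ}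
    (h : CStep m α β s s') (hs : ∀ l, 0 ≤ s l) : ∀ l, 0 ≤ s' l := by
  rcases h with ⟨j, hj, hf⟩
  intro l; rw [hf l]
  have h0 : (0:ℝ) ≤ (if l = j - 1 then α (j-1) else 0) := by
    split_ifs; exacts [(hα _).le, le_rfl]
  by_cases h2 : l = j
  · subst h2; rw [if_pos rfl]; linarith
  · rw [if_neg h2]; linarith [hs l]

lemma nonneg_rtg {α β : Fin m → ℝ} (hα : ∀ j, 0 < α j) {s s' : Fin m → ℝ}
    (h : Relation.ReflTransGen (CStep m α β) s s') (hs : ∀ l, 0 ≤ s l) : ∀ l, 0 ≤ s' l := by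
  induction h with
  | refl => exact hs
  | tail _ hstep ih => exact nonneg_step hα hstep ih


lemma energy_step {i α β : Fin m → ℝ} (hiab : ∀ j, i j * α j = i (j + 1) * β (j + 1))
    {s s' : Fin m → ℝ} (h : CStep m α β s s') :
    ∑ l, i l * s' l = ∑ l, i l * s l := by
  rcases h with ⟨j, -, hf⟩
  have key : ∀ l, i l * s' l = i l * s l
      + (if l = j - 1 then i (j-1) * α (j-1) else 0)
      - (if l = j then i j * β j else 0) := by
    intro l; rw [hf l]
    by_cases h1 : l = j - 1
    · rw [if_pos h1, if_pos h1]
      by_cases h2 : l = j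
      · rw [if_pos h2, if_pos h2]
        have e : i l = i (j-1) := by rw [h1]
        have e2 : i l = i j := by rw [h2]
        rw [← e, ← e2]; ring
      · rw [if_neg h2, if_neg h2]
        have e : i l = i (j-1) := by rw [h1]
        rw [← e]; ring
    · rw [if_neg h1, if_neg h1]
      by_cases h2 : l = j
      · rw [if_pos h2, if_pos h2]
        have e2 : i l = i j := by rw [h2]
        rw [← e2]; ring
      · rw [if_neg h2, if_neg h2]; ring
  calc ∑ l, i l * s' l
      = ∑ l, (i l * s l + (if l = j - 1 then i (j-1) * α (j-1) else 0)
          - (if l = j then i j * β j else 0)) := Finset.sum_congr rfl (fun l _ => key l)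
    _ = ∑ l, i l * s l := by
        rw [Finset.sum_sub_distrib, Finset.sum_add_distrib]
        simp only [Finset.sum_ite_eq', Finset.mem_univ, if_pos]
        have : i (j-1) * α (j-1) = i j * β j := by
          have := hiab (j-1); rwa [sub_add_cancel] at this
        rw [this]; ring

lemma energy_rtg {i α β : Fin m → ℝ} (hiab : ∀ j, i j * α j = i (j + 1) * β (j + 1))
    {s s' : Fin m → ℝ} (h : Relation.ReflTransGen (CStep m α β) s s') :
    ∑ l, i l * s' l = ∑ l, i l * s l := by
  induction h with
  | refl => rfl
  | tail _ hstep ih => rw [energy_step hiab hstep, ih]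

lemma rev_step {α β : Fin m → ℝ} {x y : Fin m → ℝ} (hx : ∀ l, 0 ≤ x l)
    (h : CStep m α β x y) :
    CStep m (fun l => β (-l)) (fun l => α (-l)) (fun l => y (-l)) (fun l => x (-l)) := by
  rcases h with ⟨j, hj, hf⟩
  refine ⟨1 - j, ?_, ?_⟩
  · -- condition : α (-(1-j)) ≤ y (-(1-j))  i.e. α (j-1) ≤ y (j-1)
    have e : -(1 - j) = j - 1 := by abel
    simp only [e]
    rw [hf (j-1)]
    by_cases hm : (j : Fin m) - 1 = j
    · rw [if_pos rfl, if_pos hm, hm]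
      linarith
    · rw [if_pos rfl, if_neg hm]
      have := hx (j-1); linarith
  · intro l
    show x (-l) = ((fun l => y (-l)) l + (if l = 1 - j - 1 then β (-(1 - j - 1)) else 0))
      - (if l = 1 - j then α (-(1 - j)) else 0)
    have e1 : (1 : Fin m) - j - 1 = -j := by abel
    have e5 : -(1 - j) = j - 1 := by abel
    have e2 : (l = -j) ↔ (-l = j) := by
      constructor
      · intro h; rw [h, neg_neg]
      · intro h; rw [← h, neg_neg]
    have e3 : (l = (1:Fin m) - j) ↔ (-l = j - 1) := by
      rw [show (1:Fin m) - j = -(j-1) by abel]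
      constructor
      · intro h; rw [h, neg_neg]
      · intro h; rw [← h, neg_neg]
    simp only [e1, e5, neg_neg]
    rw [hf (-l)]
    simp only [e2, e3]
    split_ifs <;> ring

lemma rev_rtg {α β : Fin m → ℝ} (hα : ∀ j, 0 < α j) {x y : Fin m → ℝ} (hx : ∀ l, 0 ≤ x l)
    (h : Relation.ReflTransGen (CStep m α β) x y) :
    Relation.ReflTransGen (CStep m (fun l => β (-l)) (fun l => α (-l)))
      (fun l => y (-l)) (fun l => x (-l)) := by
  induction h with
  | refl => exact .refl
  | @tail y z hxy hyz ih =>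
    exact Relation.ReflTransGen.head (rev_step (nonneg_rtg hα hxy hx) hyz) ih



/-- Reachability with explicit firing counts. -/
inductive ReachC (α β : Fin m → ℝ) : (Fin m → ℕ) → (Fin m → ℝ) → (Fin m → ℝ) → Prop
  | refl (x : Fin m → ℝ) : ReachC α β (fun _ => 0) x x
  | tail {n : Fin m → ℕ} {x y : Fin m → ℝ} (j : Fin m) (h : ReachC α β n x y)
      (hb : β j ≤ y j) :
      ReachC α β (fun l => n l + if l = j then 1 else 0) x (stepAt α β j y)

lemma ReachC.toRTG {α β : Fin m → ℝ} {n : Fin m → ℕ} {x y : Fin m → ℝ}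
    (h : ReachC α β n x y) : Relation.ReflTransGen (CStep m α β) x y := by
  induction h with
  | refl => exact .refl
  | tail j h hb ih => exact ih.tail (cstep_iff.2 ⟨j, hb, rfl⟩)

lemma ReachC.state {α β : Fin m → ℝ} {n : Fin m → ℕ} {x y : Fin m → ℝ}
    (h : ReachC α β n x y) :
    ∀ J, y J = x J + (n (J+1) : ℝ) * α J - (n J : ℝ) * β J := by
  induction h with
  | refl => intro J; simp
  | @tail n x y j h hb ih =>
    intro J
    show stepAt α β j y J = x J + ((n (J+1) + if J+1 = j then 1 else 0 : ℕ) : ℝ) * α J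
      - ((n J + if J = j then 1 else 0 : ℕ) : ℝ) * β J
    have hJ1 : (J = j - 1) ↔ (J + 1 = j) := eq_sub_iff_add_eq
    simp only [stepAt]
    rw [ih J]
    by_cases h1 : J + 1 = j
    · have h1' : J = j - 1 := hJ1.2 h1
      rw [if_pos h1', if_pos h1]
      have ea : α (j - 1) = α J := by rw [← h1']
      rw [ea]
      by_cases h2 : J = j
      · rw [if_pos h2, if_pos h2]
        have eb : β j = β J := by rw [h2]
        rw [eb]; push_cast; ring
      · rw [if_neg h2, if_neg h2]; push_cast; ring
    · have h1' : ¬ (J = j - 1) := fun hc => h1 (hJ1.1 hc)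
      rw [if_neg h1', if_neg h1]
      by_cases h2 : J = j
      · rw [if_pos h2, if_pos h2]
        have eb : β j = β J := by rw [h2]
        rw [eb]; push_cast; ring
      · rw [if_neg h2, if_neg h2]; push_cast; ring

/-- Least action principle: if some count vector `ν` makes the result stable,
then any legal firing counts are bounded by `ν`. -/
lemma ReachC.le_of_stable {α β : Fin m → ℝ} (hα : ∀ j, 0 ≤ α j)
    {ν : Fin m → ℕ} {x : Fin m → ℝ}
    {n : Fin m → ℕ} {y : Fin m → ℝ} (h : ReachC α β n x y) :
    (∀ J, x J + (ν (J+1) : ℝ) * α J - (ν J : ℝ) * β J < β J) → ∀ J, n J ≤ ν J := by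
  induction h with
  | refl => intro _ J; exact Nat.zero_le _
  | @tail n x' y j h hb ih =>
    intro hstab J
    have IH := ih hstab
    show n J + (if J = j then 1 else 0) ≤ ν J
    by_cases hJ : J = j
    · subst hJ
      rw [if_pos rfl]
      rcases lt_or_ge (n J) (ν J) with hlt | hge
      · omega
      · exfalso
        have hnJ : (n J : ℝ) = (ν J : ℝ) := by
          exact_mod_cast congrArg Nat.cast (le_antisymm (IH J) hge)
        have hyJ := h.state J
        have hmono : ((n (J+1) : ℕ) : ℝ) * α J ≤ ((ν (J+1) : ℕ) : ℝ) * α J := by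
          apply mul_le_mul_of_nonneg_right _ (hα J)
          exact_mod_cast IH (J+1)
        have := hstab J
        rw [hyJ, hnJ] at hb
        linarith
    · rw [if_neg hJ]; simpa using IH J

lemma exists_normal_of_stable {α β : Fin m → ℝ} (hα : ∀ j, 0 ≤ α j) {x : Fin m → ℝ}
    {ν : Fin m → ℕ}
    (hstab : ∀ J, x J + (ν (J+1) : ℝ) * α J - (ν J : ℝ) * β J < β J) :
    ∃ y, Relation.ReflTransGen (CStep m α β) x y ∧ Normal β y := by
  classical
  set K := ∑ J, ν J with hK
  set S : ℕ → Prop := fun k => ∃ n y, ReachC α β n x y ∧ ∑ J, n J = k with hS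
  have hS0 : S 0 := ⟨fun _ => 0, x, ReachC.refl x, by simp⟩
  have hSbound : ∀ k, S k → k ≤ K := by
    rintro k ⟨n, y, hr, rfl⟩
    exact Finset.sum_le_sum (fun J _ => hr.le_of_stable hα hstab J)
  have hspec : S (Nat.findGreatest S K) :=
    Nat.findGreatest_spec (Nat.zero_le K) hS0
  obtain ⟨n, y, hr, hsum⟩ := hspec
  refine ⟨y, hr.toRTG, ?_⟩
  intro J
  by_contra hJ
  push_neg at hJ
  have hr' := ReachC.tail J hr hJ
  have hsum' : ∑ l, (fun l => n l + if l = J then 1 else 0) l = Nat.findGreatest S K + 1 := by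
    rw [Finset.sum_add_distrib, hsum]
    simp [Finset.sum_ite_eq']
  have hS' : S (Nat.findGreatest S K + 1) := ⟨_, _, hr', hsum'⟩
  have := Nat.le_findGreatest (hSbound _ hS') hS'
  omega



/-- Dirichlet-type pigeonhole: for any positive reals `C J` and `η > 0` there are
positive integers `μ J` whose multiples `μ J * C J` all lie within `η` of a common value. -/
lemma exists_close_multiples (C : Fin m → ℝ) (hC : ∀ J, 0 < C J) {η : ℝ} (hη : 0 < η) :
    ∃ (μ : Fin m → ℕ) (T : ℝ), (∀ J, 1 ≤ μ J) ∧ ∀ J, |(μ J : ℝ) * C J - T| < η := by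
  classical
  obtain ⟨J0⟩ : Nonempty (Fin m) := inferInstance
  set Cmax : ℝ := Finset.univ.sup' Finset.univ_nonempty C with hCmaxdef
  have hCmax : ∀ J, C J ≤ Cmax := fun J => Finset.le_sup' C (Finset.mem_univ J)
  have hCmaxpos : 0 < Cmax := lt_of_lt_of_le (hC J0) (hCmax J0)
  set R : ℝ := Cmax + η with hRdef
  obtain ⟨K, hK⟩ := exists_nat_gt (Cmax / η)
  have hKpos : 0 < (K:ℝ) := lt_of_le_of_lt (div_nonneg hCmaxpos.le hη.le) hK
  have hCK : ∀ J, C J / K < η := by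
    intro J
    rw [div_lt_iff₀ hKpos]
    have h1 : Cmax < K * η := (div_lt_iff₀ hη).1 hK
    calc C J ≤ Cmax := hCmax J
      _ < K * η := h1
      _ = η * K := by ring
  -- the pigeonhole boxes
  have hbox : ∀ (nn : ℕ) (J : Fin m),
      (⌊Int.fract ((nn : ℝ) * R / C J) * K⌋).toNat < K := by
    intro nn J
    have h0 : (0:ℝ) ≤ Int.fract ((nn : ℝ) * R / C J) * K :=
      mul_nonneg (Int.fract_nonneg _) hKpos.le
    have h1 : Int.fract ((nn : ℝ) * R / C J) * K < K := by
      have := Int.fract_lt_one ((nn : ℝ) * R / C J)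
      nlinarith
    have hfl : ⌊Int.fract ((nn : ℝ) * R / C J) * K⌋ < (K:ℤ) := by
      rw [Int.floor_lt]; exact_mod_cast h1
    have h0' : (0:ℤ) ≤ ⌊Int.fract ((nn : ℝ) * R / C J) * K⌋ := Int.floor_nonneg.2 h0
    omega
  set g : Fin (K^m + 1) → (Fin m → Fin K) := fun nn J =>
    ⟨(⌊Int.fract ((nn : ℝ) * R / C J) * K⌋).toNat, hbox nn J⟩ with hgdef
  have hcard : Fintype.card (Fin m → Fin K) < Fintype.card (Fin (K^m + 1)) := by
    simp
  obtain ⟨n1, n2, hne, heq⟩ := Fintype.exists_ne_map_eq_of_card_lt g hcard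
  obtain ⟨p, q, hpq, hgeq⟩ : ∃ p q : Fin (K^m + 1), p < q ∧ g p = g q := by
    rcases hne.lt_or_gt with h | h
    exacts [⟨n1, n2, h, heq⟩, ⟨n2, n1, h, heq.symm⟩]
  set T : ℝ := (((q:ℕ):ℝ) - ((p:ℕ):ℝ)) * R with hTdef
  have hT : R ≤ T := by
    have : (1:ℝ) ≤ ((q:ℕ):ℝ) - ((p:ℕ):ℝ) := by
      have : (p:ℕ) < (q:ℕ) := hpq
      have : (p:ℕ) + 1 ≤ (q:ℕ) := this
      have := (Nat.cast_le (α := ℝ)).2 this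
      push_cast at this
      linarith
    nlinarith [hCmaxpos, hη]
  -- fractional parts are close
  have hfrac : ∀ J, |Int.fract (((q:ℕ) : ℝ) * R / C J) - Int.fract (((p:ℕ) : ℝ) * R / C J)|
      < 1 / K := by
    intro J
    have hgJ : g p J = g q J := by rw [hgeq]
    simp only [hgdef] at hgJ
    rw [Fin.mk_eq_mk] at hgJ
    have hval : (⌊Int.fract (((p:ℕ) : ℝ) * R / C J) * K⌋).toNat
        = (⌊Int.fract (((q:ℕ) : ℝ) * R / C J) * K⌋).toNat := hgJ
    have h0p : (0:ℤ) ≤ ⌊Int.fract (((p:ℕ) : ℝ) * R / C J) * K⌋ :=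
      Int.floor_nonneg.2 (mul_nonneg (Int.fract_nonneg _) hKpos.le)
    have h0q : (0:ℤ) ≤ ⌊Int.fract (((q:ℕ) : ℝ) * R / C J) * K⌋ :=
      Int.floor_nonneg.2 (mul_nonneg (Int.fract_nonneg _) hKpos.le)
    have hfl : ⌊Int.fract (((q:ℕ) : ℝ) * R / C J) * K⌋
        = ⌊Int.fract (((p:ℕ) : ℝ) * R / C J) * K⌋ := by omega
    have habs := Int.abs_sub_lt_one_of_floor_eq_floor hfl
    rw [show Int.fract (((q:ℕ) : ℝ) * R / C J) * K - Int.fract (((p:ℕ) : ℝ) * R / C J) * K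
      = (Int.fract (((q:ℕ) : ℝ) * R / C J) - Int.fract (((p:ℕ) : ℝ) * R / C J)) * K by ring]
      at habs
    rw [abs_mul, abs_of_pos hKpos] at habs
    rw [lt_div_iff₀ hKpos]
    exact habs
  -- define the integers
  set d : Fin m → ℤ := fun J => ⌊((q:ℕ) : ℝ) * R / C J⌋ - ⌊((p:ℕ) : ℝ) * R / C J⌋ with hddef
  have hkey : ∀ J, |(d J : ℝ) * C J - T| < η := by
    intro J
    have e1 : (⌊((q:ℕ) : ℝ) * R / C J⌋ : ℝ) = ((q:ℕ) : ℝ) * R / C J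
        - Int.fract (((q:ℕ) : ℝ) * R / C J) := by
      rw [← Int.self_sub_floor]; ring
    have e2 : (⌊((p:ℕ) : ℝ) * R / C J⌋ : ℝ) = ((p:ℕ) : ℝ) * R / C J
        - Int.fract (((p:ℕ) : ℝ) * R / C J) := by
      rw [← Int.self_sub_floor]; ring
    have hCJ := hC J
    have e3 : (d J : ℝ) * C J - T
        = -(Int.fract (((q:ℕ) : ℝ) * R / C J) - Int.fract (((p:ℕ) : ℝ) * R / C J)) * C J := by
      rw [hddef]
      push_cast
      rw [e1, e2]
      field_simp
      ring
    rw [e3, abs_mul, abs_neg, abs_of_pos hCJ]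
    calc |Int.fract (((q:ℕ) : ℝ) * R / C J) - Int.fract (((p:ℕ) : ℝ) * R / C J)| * C J
        < (1 / K) * C J := by
          apply mul_lt_mul_of_pos_right (hfrac J) hCJ
      _ = C J / K := by ring
      _ < η := hCK J
  have hd1 : ∀ J, (1:ℤ) ≤ d J := by
    intro J
    have h1 := hkey J
    rw [abs_lt] at h1
    have h2 : (d J : ℝ) * C J > T - η := by linarith
    have h3 : T - η ≥ Cmax := by rw [hTdef] at *; linarith [hT]
    have h4 : (d J : ℝ) * C J > C J := lt_of_le_of_lt (hCmax J) (lt_of_le_of_lt h3.le h2)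
    have h5 : (1:ℝ) < (d J : ℝ) := by
      have hCJ := hC J
      nlinarith
    exact_mod_cast h5.le
  refine ⟨fun J => (d J).toNat, T, ?_, ?_⟩
  · intro J; show 1 ≤ (d J).toNat; have := hd1 J; omega
  · intro J
    show |(((d J).toNat : ℕ) : ℝ) * C J - T| < η
    have hcast : (((d J).toNat : ℕ) : ℝ) = ((d J : ℤ) : ℝ) := by
      rw [← Int.toNat_of_nonneg (le_trans zero_le_one (hd1 J))]
      push_cast
      rfl
    rw [hcast]
    exact hkey J



set_option maxHeartbeats 1000000 in
/-- Termination: from any point of the box `[0,α)` some maximal chain reaches a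
normal form.  Proved via the least-action principle and the pigeonhole lemma. -/
lemma exists_normal_from_box {ι α β : Fin m → ℝ} (hι : ∀ j, 0 < ι j)
    (hα : ∀ j, 0 < α j) (hβ : ∀ j, 0 < β j)
    (hval : ∀ j, ι j * α j = ι (j + 1) * β (j + 1))
    {x : Fin m → ℝ} (hbox : ∀ j, x j < α j) :
    ∃ y, Relation.ReflTransGen (CStep m α β) x y ∧ Normal β y := by
  classical
  have hne : (Finset.univ : Finset (Fin m)).Nonempty := Finset.univ_nonempty
  set gap : Fin m → ℝ := fun J => ι (J+1) * β (J+1) - ι J * x J with hgapdef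
  have hgap : ∀ J, 0 < gap J := by
    intro J
    have h1 : ι J * x J < ι J * α J := by
      exact mul_lt_mul_of_pos_left (hbox J) (hι J)
    rw [hgapdef]
    simp only [← hval J]
    linarith
  set η : ℝ := Finset.univ.inf' hne gap with hηdef
  have hη : 0 < η := (Finset.lt_inf'_iff hne).2 (fun J _ => hgap J)
  obtain ⟨μ, T, hμ1, hμ⟩ := exists_close_multiples (fun J => ι J * β J)
    (fun J => mul_pos (hι J) (hβ J)) (half_pos hη)
  have hμ' : ∀ J, |(μ J : ℝ) * (ι J * β J) - T| < η / 2 := fun J => hμ J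
  have hνcast : ∀ J, ((μ J - 1 : ℕ) : ℝ) = (μ J : ℝ) - 1 := by
    intro J
    have := hμ1 J
    push_cast [Nat.cast_sub this]
    ring
  have hstab : ∀ J, x J + ((μ (J+1) - 1 : ℕ) : ℝ) * α J - ((μ J - 1 : ℕ) : ℝ) * β J < β J := by
    intro J
    rw [hνcast, hνcast]
    have key : ι J * (x J + ((μ (J+1) : ℝ) - 1) * α J - ((μ J : ℝ) - 1) * β J)
        < ι J * β J := by
      have expand : ι J * (x J + ((μ (J+1) : ℝ) - 1) * α J - ((μ J : ℝ) - 1) * β J)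
          = ι J * x J + (μ (J+1) : ℝ) * (ι J * α J) - (ι J * α J)
            - (μ J : ℝ) * (ι J * β J) + (ι J * β J) := by ring
      rw [expand, hval J]
      have habs1 := abs_lt.1 (hμ' (J+1))
      have habs2 := abs_lt.1 (hμ' J)
      have hXgap : η ≤ gap J := Finset.inf'_le _ (Finset.mem_univ J)
      rw [hgapdef] at hXgap
      simp only at hXgap
      linarith [habs1.1, habs1.2, habs2.1, habs2.2]
    exact lt_of_mul_lt_mul_left key (hι J).le
  exact exists_normal_of_stable (ν := fun J => μ J - 1) (fun j => (hα j).le) hstab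


end Ohara


open Ohara in
/-- the map `ψ`, sending `t ∈ P` to the normal form reachable
from `t`, is a bijection from `P = [0,a_1)×⋯×[0,a_m)` onto
`Q = [0,b_1)×⋯×[0,b_m)` and preserves the linear functional
`x ↦ Σ_j i_j·x_j`; i.e. `ψ(t) - t` lies in the hyperplane
`i_1x_1 + ⋯ + i_mx_m = 0`. -/
theorem ohara_bijection_functional {m : ℕ} [NeZero m] (i a b : Fin m → ℝ)
    (hi : ∀ j, 0 < i j) (ha : ∀ j, 0 < a j) (hb : ∀ j, 0 < b j)
    (hiab : ∀ j, i j * a j = i (j + 1) * b (j + 1))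
    (psi : (Fin m → ℝ) → (Fin m → ℝ))
    (hpsi : ∀ t, InBox a t →
      Relation.ReflTransGen (CStep m a b) t (psi t) ∧ ∀ j, psi t j < b j) :
    Set.BijOn psi {t | InBox a t} {s | InBox b s} ∧
    ∀ t, InBox a t → ∑ j, i j * psi t j = ∑ j, i j * t j := by
  classical
  have hAB1 : (fun l : Fin m => (fun l : Fin m => a (-l)) (-l)) = a := by
    funext l; simp
  have hAB2 : (fun l : Fin m => (fun l : Fin m => b (-l)) (-l)) = b := by
    funext l; simp
  -- forward chains from box points stay nonnegative
  have hnn : ∀ t, InBox a t → ∀ l, (0:ℝ) ≤ psi t l := by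
    intro t ht l
    exact nonneg_rtg ha (hpsi t ht).1 (fun l' => (ht l').1) l
  -- Maps to Q
  have hMaps : Set.MapsTo psi {t | InBox a t} {s | InBox b s} := by
    intro t ht
    exact fun j => ⟨hnn t ht j, (hpsi t ht).2 j⟩
  -- Injectivity
  have hInj : Set.InjOn psi {t | InBox a t} := by
    intro t1 ht1 t2 ht2 heq
    have rev1 := rev_rtg ha (fun l => (ht1 l).1) (hpsi t1 ht1).1
    have rev2 := rev_rtg ha (fun l => (ht2 l).1) (hpsi t2 ht2).1
    rw [heq] at rev1
    have hn1 : Normal (fun l => a (-l)) (fun l => t1 (-l)) := fun J => (ht1 (-J)).2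
    have hn2 : Normal (fun l => a (-l)) (fun l => t2 (-l)) := fun J => (ht2 (-J)).2
    have hBpos : ∀ j : Fin m, 0 < (fun l => b (-l)) j := fun j => hb (-j)
    have := uniq hBpos rev1 rev2 hn1 hn2
    funext l
    have h2 := congrFun this (-l)
    simpa using h2
  -- Surjectivity
  have hSurj : Set.SurjOn psi {t | InBox a t} {s | InBox b s} := by
    intro s hs
    have hs' : InBox b s := hs
    -- mirrored system data
    have hι : ∀ j : Fin m, 0 < (fun l => i (-l)) j := fun j => hi (-j)
    have hA : ∀ j : Fin m, 0 < (fun l => b (-l)) j := fun j => hb (-j)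
    have hB : ∀ j : Fin m, 0 < (fun l => a (-l)) j := fun j => ha (-j)
    have hval : ∀ j : Fin m, (fun l => i (-l)) j * (fun l => b (-l)) j
        = (fun l => i (-l)) (j+1) * (fun l => a (-l)) (j+1) := by
      intro j
      have h := hiab (-(j+1))
      have e : (-(j+1) + 1 : Fin m) = -j := by abel
      rw [e] at h
      simpa using h.symm
    have hbox : ∀ j : Fin m, (fun l => s (-l)) j < (fun l => b (-l)) j :=
      fun j => (hs' (-j)).2
    obtain ⟨y, hchain, hynorm⟩ :=
      exists_normal_from_box (ι := fun l => i (-l)) hι hA hB hval hbox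
    have hx0nn : ∀ l : Fin m, (0:ℝ) ≤ (fun l => s (-l)) l := fun l => (hs' (-l)).1
    have hynn : ∀ l, 0 ≤ y l := nonneg_rtg hA hchain hx0nn
    -- reverse the mirrored chain back to a forward chain
    have rev := rev_rtg hA hx0nn hchain
    rw [hAB1, hAB2] at rev
    have hsid : (fun l : Fin m => (fun l : Fin m => s (-l)) (-l)) = s := by
      funext l; simp
    rw [hsid] at rev
    -- rev : ReflTransGen (CStep m a b) (fun l => y (-l)) s
    set t : Fin m → ℝ := fun l => y (-l) with htdef
    have htP : InBox a t := by
      intro l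
      refine ⟨hynn (-l), ?_⟩
      have := hynorm (-l)
      simpa using this
    have hψ : psi t = s := by
      apply uniq ha (hpsi t htP).1 rev
      · exact fun j => (hpsi t htP).2 j
      · exact fun j => (hs' j).2
    exact ⟨t, htP, hψ⟩
  exact ⟨⟨hMaps, hInj, hSurj⟩, fun t ht => energy_rtg hiab (hpsi t ht).1⟩
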